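/- Let g : [-1,1] → ℝ be continuous and not identically zero, and suppose g vanishes on an infinite subset of [-1,1]. Then for every natural number d, g has at least d+1 distinct zeros in [-1,1]; consequently, if g is C^{d+1}, there is a point t_0 with |g^{(d+1)}(t_0)| ≥ m·(d+1)!/2^{d+1}, where m = max|g| > 0. -/

import Mathlib

open Set Polynomial

private lemma polyContDiff (n : WithTop ℕ∞) (p : Polynomial ℝ) :
    ContDiff ℝ n (fun x : ℝ => p.eval x) := by
  induction p using Polynomial.induction_on' with
  | add p q hp hq => simpa using hp.add hq
  | monomial k a =>
      simpa [Polynomial.eval_monomial] using (contDiff_const (c := a)).mul (contDiff_id.pow k)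

private lemma polyIterDeriv (n : ℕ) (p : Polynomial ℝ) {x : ℝ}
    (hx : x ∈ Set.Icc (-1:ℝ) 1) :
    iteratedDerivWithin n (fun y : ℝ => p.eval y) (Set.Icc (-1:ℝ) 1) x
      = (Polynomial.derivative^[n] p).eval x := by
  have hs : UniqueDiffOn ℝ (Set.Icc (-1:ℝ) 1) := uniqueDiffOn_Icc (by norm_num)
  induction n generalizing p x with
  | zero => simp
  | succ n ih =>
    rw [iteratedDerivWithin_succ']
    have h1 : Set.EqOn (derivWithin (fun y : ℝ => p.eval y) (Set.Icc (-1:ℝ) 1))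
        (fun y : ℝ => p.derivative.eval y) (Set.Icc (-1:ℝ) 1) := fun y hy =>
      Polynomial.derivWithin p (hs y hy)
    rw [iteratedDerivWithin_congr h1 hx, ih p.derivative hx,
      Function.iterate_succ_apply]

private lemma rolle_finset (f : ℝ → ℝ) (hfc : ContinuousOn f (Set.Icc (-1:ℝ) 1)) :
    ∀ n : ℕ, ∀ Z : Finset ℝ, Z.card = n → (Z : Set ℝ) ⊆ Set.Icc (-1:ℝ) 1 →
      (∀ t ∈ Z, f t = 0) → ∀ hne : Z.Nonempty,
      ∃ Z' : Finset ℝ, n - 1 ≤ Z'.card ∧ (∀ t ∈ Z', deriv f t = 0) ∧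
        ∀ t ∈ Z', Z.min' hne < t ∧ t < 1 := by
  intro n
  induction n with
  | zero => intro Z hcard hsub hz hne; exact ⟨∅, by simp, by simp, by simp⟩
  | succ n ih =>
    intro Z hcard hsub hz hne
    rcases Nat.eq_zero_or_pos n with hn | hn
    · exact ⟨∅, by simp [hn], by simp, by simp⟩
    have haZ : Z.min' hne ∈ Z := Z.min'_mem hne
    set a := Z.min' hne with ha
    have hZ2 : (Z.erase a).Nonempty := by
      rw [← Finset.card_pos, Finset.card_erase_of_mem haZ, hcard]; omega
    set b := (Z.erase a).min' hZ2 with hb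
    have hbZ : b ∈ Z.erase a := Finset.min'_mem _ _
    have hbZ' : b ∈ Z := Finset.mem_of_mem_erase hbZ
    have hab : a < b := lt_of_le_of_ne (Z.min'_le b hbZ')
        (Ne.symm (Finset.ne_of_mem_erase hbZ))
    have hsub' : Set.Icc a b ⊆ Set.Icc (-1:ℝ) 1 :=
      Set.Icc_subset_Icc (hsub haZ).1 (hsub hbZ').2
    obtain ⟨c, hc, hc0⟩ := exists_deriv_eq_zero hab (hfc.mono hsub')
      ((hz a haZ).trans (hz b hbZ').symm)
    obtain ⟨Z'', hcard'', hz'', hbd''⟩ := ih (Z.erase a)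
      (by rw [Finset.card_erase_of_mem haZ, hcard]; omega)
      (fun t ht => hsub (Finset.mem_coe.2 (Finset.mem_of_mem_erase (Finset.mem_coe.1 ht))))
      (fun t ht => hz t (Finset.mem_of_mem_erase ht)) hZ2
    refine ⟨insert c Z'', ?_, ?_, ?_⟩
    · have hcZ : c ∉ Z'' := fun h => absurd ((hbd'' c h).1) (not_lt.2 hc.2.le)
      rw [Finset.card_insert_of_notMem hcZ]; omega
    · intro t ht; rcases Finset.mem_insert.1 ht with rfl | ht
      · exact hc0
      · exact hz'' t ht
    · intro t ht; rcases Finset.mem_insert.1 ht with rfl | ht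
      · exact ⟨hc.1, lt_of_lt_of_le hc.2 (hsub hbZ').2⟩
      · exact ⟨hab.trans (hbd'' t ht).1, (hbd'' t ht).2⟩

private lemma iterated_rolle :
    ∀ (n : ℕ) (f : ℝ → ℝ), ContDiffOn ℝ n f (Set.Icc (-1:ℝ) 1) →
    ∀ Z : Finset ℝ, (Z : Set ℝ) ⊆ Set.Icc (-1:ℝ) 1 → n + 1 ≤ Z.card →
      (∀ t ∈ Z, f t = 0) →
      ∃ ξ ∈ Set.Icc (-1:ℝ) 1, iteratedDerivWithin n f (Set.Icc (-1:ℝ) 1) ξ = 0 := by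
  intro n
  induction n with
  | zero =>
      intro f hf Z hsub hcard hz
      obtain ⟨t, ht⟩ := Finset.card_pos.1 (show 0 < Z.card by omega)
      exact ⟨t, hsub ht, by simpa using hz t ht⟩
  | succ n ih =>
      intro f hf Z hsub hcard hz
      have hs : UniqueDiffOn ℝ (Set.Icc (-1:ℝ) 1) := uniqueDiffOn_Icc (by norm_num)
      have hfc : ContinuousOn f (Set.Icc (-1:ℝ) 1) := hf.continuousOn
      have hne : Z.Nonempty := Finset.card_pos.1 (show 0 < Z.card by omega)
      obtain ⟨Z', hcard', hz', hbd'⟩ := rolle_finset f hfc Z.card Z rfl hsub hz hne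
      have hmem : ∀ t ∈ Z', t ∈ Set.Ioo (-1:ℝ) 1 := by
        intro t ht
        exact ⟨lt_of_le_of_lt (hsub (Finset.min'_mem _ hne)).1 (hbd' t ht).1, (hbd' t ht).2⟩
      have hz'' : ∀ t ∈ Z', derivWithin f (Set.Icc (-1:ℝ) 1) t = 0 := by
        intro t ht
        rw [derivWithin_of_mem_nhds (Icc_mem_nhds (hmem t ht).1 (hmem t ht).2)]
        exact hz' t ht
      have hf' : ContDiffOn ℝ n (derivWithin f (Set.Icc (-1:ℝ) 1)) (Set.Icc (-1:ℝ) 1) :=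
        hf.derivWithin hs (by exact_mod_cast le_rfl)
      obtain ⟨ξ, hξ, h0⟩ := ih (derivWithin f (Set.Icc (-1:ℝ) 1)) hf' Z'
        (fun t ht => Set.Ioo_subset_Icc_self (hmem t (Finset.mem_coe.1 ht)))
        (by omega) hz''
      exact ⟨ξ, hξ, by rw [iteratedDerivWithin_succ']; exact h0⟩


/-- If `g : [-1,1] → ℝ` is continuous, not identically zero, and vanishes on an infinite
subset of `[-1,1]`, then for every `d` it has at least `d+1` distinct zeros in `[-1,1]`;
consequently, if `g` is `C^{d+1}` on `[-1,1]` with `max |g| = m` (so `m > 0`), there is a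
point `t₀` with `|g^{(d+1)}(t₀)| ≥ m (d+1)!/2^(d+1)`. -/
theorem infinite_zeros_rigidity
    (g : ℝ → ℝ) (hgc : ContinuousOn g (Set.Icc (-1 : ℝ) 1))
    (hnz : ∃ t ∈ Set.Icc (-1 : ℝ) 1, g t ≠ 0)
    (hinf : {t ∈ Set.Icc (-1 : ℝ) 1 | g t = 0}.Infinite)
    (d : ℕ) (m : ℝ)
    (hbound : ∀ t ∈ Set.Icc (-1 : ℝ) 1, |g t| ≤ m)
    (hattain : ∃ t ∈ Set.Icc (-1 : ℝ) 1, |g t| = m) :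
    (∃ Z : Finset ℝ, (Z : Set ℝ) ⊆ Set.Icc (-1 : ℝ) 1 ∧ d + 1 ≤ Z.card ∧
        ∀ t ∈ Z, g t = 0) ∧
    (ContDiffOn ℝ (d + 1) g (Set.Icc (-1 : ℝ) 1) →
      ∃ t₀ ∈ Set.Icc (-1 : ℝ) 1,
        m * (Nat.factorial (d + 1) : ℝ) / 2 ^ (d + 1) ≤
          |iteratedDerivWithin (d + 1) g (Set.Icc (-1 : ℝ) 1) t₀|) := by
  have hs : UniqueDiffOn ℝ (Set.Icc (-1:ℝ) 1) := uniqueDiffOn_Icc (by norm_num)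
  obtain ⟨Z, hZsub, hZcard⟩ := hinf.exists_subset_card_eq (d + 1)
  have hZicc : (Z : Set ℝ) ⊆ Set.Icc (-1:ℝ) 1 := fun t ht => (hZsub ht).1
  have hZzero : ∀ t ∈ Z, g t = 0 := fun t ht => (hZsub ht).2
  refine ⟨⟨Z, hZicc, hZcard.ge, hZzero⟩, ?_⟩
  intro hd
  obtain ⟨ts, hts, hm⟩ := hattain
  obtain ⟨u, hu, hgu⟩ := hnz
  have hm0 : 0 < m := lt_of_lt_of_le (abs_pos.2 hgu) (hbound u hu)
  have hgts : g ts ≠ 0 := by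
    intro h; rw [h, abs_zero] at hm; exact hm0.ne hm
  have htsZ : ts ∉ Z := fun h => hgts (hZzero ts h)
  set w : ℝ := ∏ z ∈ Z, (ts - z) with hw
  have hwne : w ≠ 0 :=
    Finset.prod_ne_zero_iff.2 fun z hz => sub_ne_zero.2 fun h => htsZ (by rw [h]; exact hz)
  set c : ℝ := g ts / w with hc
  set p : Polynomial ℝ := Polynomial.C c * ∏ z ∈ Z, (Polynomial.X - Polynomial.C z) with hp
  have hpeval : ∀ y : ℝ, p.eval y = c * ∏ z ∈ Z, (y - z) := by
    intro y; simp [hp, Polynomial.eval_prod]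
  have hPts : p.eval ts = g ts := by
    rw [hpeval, ← hw, hc, div_mul_cancel₀ _ hwne]
  have hPz : ∀ z ∈ Z, p.eval z = 0 := by
    intro z hz
    rw [hpeval]
    rw [Finset.prod_eq_zero hz (sub_self z)]
    ring
  have hP : ContDiffOn ℝ (d+1) (fun y : ℝ => p.eval y) (Set.Icc (-1:ℝ) 1) :=
    (polyContDiff _ p).contDiffOn
  have hh : ContDiffOn ℝ (d+1) (g - fun y : ℝ => p.eval y) (Set.Icc (-1:ℝ) 1) := hd.sub hP
  obtain ⟨ξ, hξ, h0⟩ := iterated_rolle (d+1) _ hh (insert ts Z)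
    (by rw [Finset.coe_insert]; exact Set.insert_subset hts hZicc)
    (by rw [Finset.card_insert_of_notMem htsZ, hZcard])
    (by
      intro t ht
      rcases Finset.mem_insert.1 ht with rfl | ht
      · simp [hPts]
      · simp [hZzero t ht, hPz t ht])
  refine ⟨ξ, hξ, ?_⟩
  have hd' : ContDiffOn ℝ ((d+1 : ℕ) : WithTop ℕ∞) g (Set.Icc (-1:ℝ) 1) := by
    exact_mod_cast hd
  have hP' : ContDiffOn ℝ ((d+1 : ℕ) : WithTop ℕ∞) (fun y : ℝ => p.eval y)
      (Set.Icc (-1:ℝ) 1) := by exact_mod_cast hP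
  rw [iteratedDerivWithin_sub hξ hs (hd' ξ hξ) (hP' ξ hξ), sub_eq_zero] at h0
  -- compute the iterated derivative of the polynomial
  set q : Polynomial ℝ := ∏ z ∈ Z, (Polynomial.X - Polynomial.C z) with hq
  have hqmonic : q.Monic := Polynomial.monic_prod_of_monic _ _ fun z _ => Polynomial.monic_X_sub_C z
  have hqdeg : q.natDegree = d + 1 := by
    rw [hq, Polynomial.natDegree_prod _ _ (fun z _ => Polynomial.X_sub_C_ne_zero z)]
    simp [Polynomial.natDegree_X_sub_C, hZcard]
  have hqiter : Polynomial.derivative^[d+1] q = Polynomial.C (((d+1).factorial : ℝ)) := by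
    have h1 : (Polynomial.derivative^[d+1] q).natDegree ≤ 0 := by
      have := Polynomial.natDegree_iterate_derivative q (d+1)
      omega
    rw [Polynomial.eq_C_of_natDegree_le_zero h1, Polynomial.coeff_iterate_derivative, zero_add,
      Nat.descFactorial_self]
    rw [← hqdeg, hqmonic.coeff_natDegree]
    simp [nsmul_eq_mul]
  have hval : iteratedDerivWithin (d+1) g (Set.Icc (-1:ℝ) 1) ξ = c * ((d+1).factorial : ℝ) := by
    rw [h0, polyIterDeriv (d+1) p hξ, hp, Polynomial.iterate_derivative_C_mul, hqiter]
    simp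
  rw [hval, abs_mul, abs_of_nonneg (by positivity : (0:ℝ) ≤ (((d+1).factorial : ℕ) : ℝ))]
  have hcabs : |c| = m / |w| := by rw [hc, abs_div, hm]
  have hwle : |w| ≤ 2 ^ (d+1) := by
    rw [hw, Finset.abs_prod]
    calc ∏ z ∈ Z, |ts - z| ≤ ∏ _z ∈ Z, (2:ℝ) := by
            refine Finset.prod_le_prod (fun z _ => abs_nonneg _) (fun z hz => ?_)
            have h2 := hZicc hz
            exact abs_le.2 ⟨by linarith [hts.1, h2.2], by linarith [hts.2, h2.1]⟩
      _ = 2 ^ (d+1) := by rw [Finset.prod_const, hZcard]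
  have hwpos : 0 < |w| := abs_pos.2 hwne
  rw [hcabs, div_mul_eq_mul_div]
  gcongr
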